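/- arXiv:0812.1683 — 2 statements merged into one kernel-verified Lean document; each statement's English description precedes it below -/
import Mathlib

section
/- For the mean-field 1-trigonometric model, the quantity σ_N(v) = (1/N) ln |Σ_{j=0}^{N} (−1)^j μ_j(v)|, where μ_j(v) = C(N,j) if 2Δj/N ≤ v and 0 otherwise, satisfies: for fixed v with 0 < v < 2Δ and v/(2Δ) irrational, lim_{N→∞} σ_N(v) exists and equals −(x ln x + (1−x) ln(1−x)) where x = v/(2Δ) — in particular σ(v) is a real-analytic function of v on (0, 2Δ), consistent with the absence of a phase transition for k = 1. -/
open Real Filter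


noncomputable def binEnt (y : ℝ) : ℝ := -(y * Real.log y + (1 - y) * Real.log (1 - y))

lemma ratio_up (n m j : ℕ) (hjm : j < m) :
    n.choose j * (n - m) ≤ n.choose (j + 1) * m := by
  have key : (n - m) * (j + 1) ≤ (n - j) * m :=
    Nat.mul_le_mul (Nat.sub_le_sub_left (le_of_lt hjm) n) hjm
  have h2 : n.choose (j+1) * (j+1) = n.choose j * (n - j) := Nat.choose_succ_right_eq n j
  have : n.choose j * (n - m) * (j + 1) ≤ n.choose (j + 1) * m * (j + 1) := by
    calc n.choose j * (n - m) * (j + 1) = n.choose j * ((n - m) * (j + 1)) := by ring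
    _ ≤ n.choose j * ((n - j) * m) := Nat.mul_le_mul_left _ key
    _ = n.choose j * (n - j) * m := by ring
    _ = n.choose (j+1) * (j+1) * m := by rw [h2]
    _ = n.choose (j + 1) * m * (j + 1) := by ring
  exact Nat.le_of_mul_le_mul_right this (Nat.succ_pos j)

lemma ratio_down (n m j : ℕ) (hmj : m ≤ j) :
    n.choose (j + 1) * m ≤ n.choose j * (n - m) := by
  have key : (n - j) * m ≤ (n - m) * (j + 1) :=
    Nat.mul_le_mul (Nat.sub_le_sub_left hmj n) (le_of_lt (Nat.lt_succ_of_le hmj))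
  have h2 : n.choose (j+1) * (j+1) = n.choose j * (n - j) := Nat.choose_succ_right_eq n j
  have : n.choose (j + 1) * m * (j + 1) ≤ n.choose j * (n - m) * (j + 1) := by
    calc n.choose (j + 1) * m * (j + 1) = n.choose (j+1) * (j+1) * m := by ring
    _ = n.choose j * (n - j) * m := by rw [h2]
    _ = n.choose j * ((n - j) * m) := by ring
    _ ≤ n.choose j * ((n - m) * (j + 1)) := Nat.mul_le_mul_left _ key
    _ = n.choose j * (n - m) * (j + 1) := by ring
  exact Nat.le_of_mul_le_mul_right this (Nat.succ_pos j)

/-- central-term bounds: with x = m/n, 1/(n+1) ≤ C(n,m) x^m (1-x)^(n-m) ≤ 1. -/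
lemma term_bounds (n m : ℕ) (h0 : 0 < m) (h1 : m < n) :
    (1 : ℝ) / (n + 1) ≤ (n.choose m : ℝ) * ((m : ℝ)/n) ^ m * (1 - (m : ℝ)/n) ^ (n - m)
    ∧ (n.choose m : ℝ) * ((m : ℝ)/n) ^ m * (1 - (m : ℝ)/n) ^ (n - m) ≤ 1 := by
  have hn : (0:ℝ) < n := by exact_mod_cast lt_trans h0 h1
  set x : ℝ := (m : ℝ) / n with hxdef
  have hx0 : 0 < x := div_pos (by exact_mod_cast h0) hn
  have hx1 : x < 1 := by
    rw [hxdef, div_lt_one hn]; exact_mod_cast h1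
  have h1x : 0 < 1 - x := by linarith
  set T : ℕ → ℝ := fun j => (n.choose j : ℝ) * x ^ j * (1 - x) ^ (n - j) with hT
  have hTnn : ∀ j, 0 ≤ T j := fun j => by positivity
  have hsum : ∑ j ∈ Finset.range (n + 1), T j = 1 := by
    have h := add_pow x (1 - x) n
    rw [add_sub_cancel, one_pow] at h
    have h2 : ∑ j ∈ Finset.range (n + 1), T j
        = ∑ j ∈ Finset.range (n + 1), x ^ j * (1 - x) ^ (n - j) * (n.choose j : ℝ) :=
      Finset.sum_congr rfl fun j _ => by simp only [hT]; ring
    rw [h2, ← h]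
  -- key real ratio facts
  have hnx : (n : ℝ) * x = m := by rw [hxdef]; field_simp
  have hn1x : (n : ℝ) * (1 - x) = ((n - m : ℕ) : ℝ) := by
    rw [Nat.cast_sub (le_of_lt h1), hxdef]; field_simp
  have step_up : ∀ j, j < m → T j ≤ T (j + 1) := by
    intro j hj
    have hjn : j < n := lt_trans hj h1
    have base : (n.choose j : ℝ) * (1 - x) ≤ (n.choose (j+1) : ℝ) * x := by
      have hNat := ratio_up n m j hj
      have : (n.choose j : ℝ) * ((n:ℝ) * (1 - x)) ≤ (n.choose (j+1) : ℝ) * ((n:ℝ) * x) := by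
        rw [hnx, hn1x]; exact_mod_cast hNat
      have hn' : (0:ℝ) < n := hn
      nlinarith [this]
    have hrw : n - j = (n - (j + 1)) + 1 := by omega
    have e1 : T j = ((n.choose j : ℝ) * (1 - x)) * (x ^ j * (1 - x) ^ (n - (j+1))) := by
      simp only [hT]; rw [hrw, pow_succ]; ring
    have e2 : T (j+1) = ((n.choose (j+1) : ℝ) * x) * (x ^ j * (1 - x) ^ (n - (j+1))) := by
      simp only [hT]; rw [pow_succ]; ring
    rw [e1, e2]
    exact mul_le_mul_of_nonneg_right base (by positivity)
  have step_down : ∀ j, m ≤ j → T (j + 1) ≤ T j := by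
    intro j hj
    rcases le_or_gt n j with hnj | hjn
    · have : T (j + 1) = 0 := by
        rw [hT]; simp [Nat.choose_eq_zero_of_lt (by omega : n < j + 1)]
      rw [this]; exact hTnn j
    · have base : (n.choose (j+1) : ℝ) * x ≤ (n.choose j : ℝ) * (1 - x) := by
        have hNat := ratio_down n m j hj
        have : (n.choose (j+1) : ℝ) * ((n:ℝ) * x) ≤ (n.choose j : ℝ) * ((n:ℝ) * (1 - x)) := by
          rw [hnx, hn1x]; exact_mod_cast hNat
        nlinarith [this]
      have hrw : n - j = (n - (j + 1)) + 1 := by omega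
      have e1 : T j = ((n.choose j : ℝ) * (1 - x)) * (x ^ j * (1 - x) ^ (n - (j+1))) := by
        simp only [hT]; rw [hrw, pow_succ]; ring
      have e2 : T (j+1) = ((n.choose (j+1) : ℝ) * x) * (x ^ j * (1 - x) ^ (n - (j+1))) := by
        simp only [hT]; rw [pow_succ]; ring
      rw [e1, e2]
      exact mul_le_mul_of_nonneg_right base (by positivity)
  have up : ∀ d, ∀ j, j + d = m → T j ≤ T m := by
    intro d
    induction d with
    | zero =>
      intro j hj
      have : j = m := by omega
      rw [this]
    | succ d ih =>
      intro j hj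
      have h1' : j < m := by omega
      exact le_trans (step_up j h1') (ih (j+1) (by omega))
  have down : ∀ d, T (m + d) ≤ T m := by
    intro d
    induction d with
    | zero => exact le_refl _
    | succ d ih =>
      have := step_down (m + d) (Nat.le_add_right m d)
      exact le_trans (by rw [show m + (d+1) = (m + d) + 1 from rfl]; exact this) ih
  have hmax : ∀ j ∈ Finset.range (n + 1), T j ≤ T m := by
    intro j _
    rcases le_or_gt j m with hjm | hmj
    · exact up (m - j) j (by omega)
    · have := down (j - m); rwa [Nat.add_sub_cancel' (le_of_lt hmj)] at this
  constructor
  · have : (1:ℝ) ≤ (n + 1) * T m := by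
      calc (1:ℝ) = ∑ j ∈ Finset.range (n + 1), T j := hsum.symm
      _ ≤ ∑ _j ∈ Finset.range (n + 1), T m := Finset.sum_le_sum hmax
      _ = (n + 1) * T m := by rw [Finset.sum_const, Finset.card_range]; push_cast; ring
    have goal : (1:ℝ) / (n + 1) ≤ T m := by
      rw [div_le_iff₀ (by positivity)]
      linarith [this]
    exact goal
  · have goal : T m ≤ 1 := by
      calc T m ≤ ∑ j ∈ Finset.range (n + 1), T j :=
          Finset.single_le_sum (fun j _ => hTnn j) (Finset.mem_range.mpr (by omega))
      _ = 1 := hsum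
    exact goal

/-- entropy bounds on log of binomial coefficient -/
lemma log_choose_bounds (n m : ℕ) (h0 : 0 < m) (h1 : m < n) :
    (n : ℝ) * binEnt ((m : ℝ)/n) - Real.log (n + 1) ≤ Real.log (n.choose m)
    ∧ Real.log (n.choose m) ≤ (n : ℝ) * binEnt ((m : ℝ)/n) := by
  obtain ⟨hlo, hhi⟩ := term_bounds n m h0 h1
  have hn : (0:ℝ) < n := by exact_mod_cast lt_trans h0 h1
  set x : ℝ := (m : ℝ) / n with hxdef
  have hx0 : 0 < x := div_pos (by exact_mod_cast h0) hn
  have hx1 : x < 1 := by rw [hxdef, div_lt_one hn]; exact_mod_cast h1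
  have h1x : 0 < 1 - x := by linarith
  have hc : (0:ℝ) < (n.choose m : ℝ) := by
    exact_mod_cast Nat.choose_pos (le_of_lt h1)
  have hT : (0:ℝ) < (n.choose m : ℝ) * x ^ m * (1 - x) ^ (n - m) := by positivity
  have hlog : Real.log ((n.choose m : ℝ) * x ^ m * (1 - x) ^ (n - m))
      = Real.log (n.choose m) + m * Real.log x + ((n - m : ℕ) : ℝ) * Real.log (1 - x) := by
    rw [Real.log_mul (by positivity) (by positivity), Real.log_mul (by positivity) (by positivity),
      Real.log_pow, Real.log_pow]
    try push_cast
    try ring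
  have hent : (n : ℝ) * binEnt x = -((m:ℝ) * Real.log x + ((n - m : ℕ):ℝ) * Real.log (1 - x)) := by
    have hnx : (n : ℝ) * x = m := by rw [hxdef]; field_simp
    have hn1x : (n : ℝ) * (1 - x) = ((n - m : ℕ) : ℝ) := by
      rw [Nat.cast_sub (le_of_lt h1), hxdef]; field_simp
    rw [binEnt, ← hnx, ← hn1x]
    ring
  have lo' : Real.log ((1:ℝ)/(n+1)) ≤ Real.log ((n.choose m : ℝ) * x ^ m * (1 - x) ^ (n - m)) :=
    Real.log_le_log (by positivity) hlo
  have hi' : Real.log ((n.choose m : ℝ) * x ^ m * (1 - x) ^ (n - m)) ≤ Real.log 1 :=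
    Real.log_le_log hT hhi
  rw [Real.log_one] at hi'
  rw [Real.log_div (by norm_num) (by positivity), Real.log_one] at lo'
  rw [hlog] at lo' hi'
  refine ⟨by rw [hent]; linarith, by rw [hent]; linarith⟩

lemma altSum (K : ℕ) : ∀ m : ℕ, ∑ j ∈ Finset.range (m + 1), (-1 : ℤ) ^ j * ((K + 1).choose j : ℤ)
    = (-1) ^ m * (K.choose m : ℤ) := by
  intro m
  induction m with
  | zero => simp
  | succ m ih =>
    rw [Finset.sum_range_succ, ih, Nat.choose_succ_succ' K m]
    push_cast
    ring


lemma analyticAt_rlog {x : ℝ} (hx : 0 < x) : AnalyticAt ℝ Real.log x := by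
  have hc : AnalyticAt ℂ Complex.log (x : ℂ) :=
    analyticAt_clog (Complex.ofReal_mem_slitPlane.mpr hx)
  have h1 : AnalyticAt ℝ (fun y : ℝ => (Complex.log (y : ℂ)).re) x :=
    (Complex.reCLM.analyticAt _).comp
      ((hc.restrictScalars (𝕜 := ℝ)).comp (Complex.ofRealCLM.analyticAt x))
  apply h1.congr
  have : ∀ᶠ y : ℝ in nhds x, 0 < y := eventually_gt_nhds hx
  filter_upwards [this] with y hy
  rw [← Complex.ofReal_log hy.le, Complex.ofReal_re]

lemma binEnt_analytic (Δ : ℝ) (hΔ : 0 < Δ) :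
    AnalyticOnNhd ℝ
      (fun v : ℝ => -(v / (2 * Δ) * Real.log (v / (2 * Δ)) +
        (1 - v / (2 * Δ)) * Real.log (1 - v / (2 * Δ))))
      (Set.Ioo 0 (2 * Δ)) := by
  intro v hv
  obtain ⟨hv0, hv2⟩ := hv
  have hc : (0:ℝ) < 2 * Δ := by linarith
  have hx0 : 0 < v / (2 * Δ) := div_pos hv0 hc
  have hx1 : v / (2 * Δ) < 1 := (div_lt_one hc).mpr hv2
  have hf : AnalyticAt ℝ (fun v : ℝ => v / (2 * Δ)) v := by
    simp only [div_eq_mul_inv]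
    exact (analyticAt_id).mul analyticAt_const
  have hg : AnalyticAt ℝ (fun v : ℝ => 1 - v / (2 * Δ)) v := analyticAt_const.sub hf
  have hlog1 : AnalyticAt ℝ (fun v : ℝ => Real.log (v / (2 * Δ))) v :=
    AnalyticAt.comp (g := Real.log) (f := fun v : ℝ => v / (2 * Δ)) (analyticAt_rlog hx0) hf
  have hlog2 : AnalyticAt ℝ (fun v : ℝ => Real.log (1 - v / (2 * Δ))) v :=
    AnalyticAt.comp (g := Real.log) (f := fun v : ℝ => 1 - v / (2 * Δ)) (analyticAt_rlog (by linarith)) hg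
  exact ((hf.mul hlog1).add (hg.mul hlog2)).neg



/-- For the mean-field 1-trigonometric model, σ_N(v) = (1/N)ln|Σ_j(−1)^j μ_j(v)| with
μ_j(v) = C(N,j) for 2Δj/N ≤ v. For 0 < v < 2Δ with v/(2Δ) irrational, σ_N(v) converges as
N → ∞ to the binary entropy −(x ln x + (1−x)ln(1−x)), x = v/(2Δ); in particular the limit
σ is real-analytic on (0,2Δ), consistent with the absence of a phase transition for k=1. -/
theorem k_trig_model_k1_sigma_limit
    (Δ : ℝ) (hΔ : 0 < Δ)
    (μ : ℕ → ℕ → ℝ → ℤ)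
    (hμ : ∀ N j (v : ℝ), μ N j v = if 2 * Δ * j / N ≤ v then (N.choose j : ℤ) else 0)
    (σ : ℕ → ℝ → ℝ)
    (hσ : ∀ N (v : ℝ), σ N v =
      (1 / N) * Real.log |(∑ j ∈ Finset.range (N + 1), (-1 : ℤ) ^ j * μ N j v : ℤ)|) :
    (∀ v : ℝ, 0 < v → v < 2 * Δ → Irrational (v / (2 * Δ)) →
      Tendsto (fun N => σ N v) atTop
        (nhds (-(v / (2 * Δ) * Real.log (v / (2 * Δ)) +
          (1 - v / (2 * Δ)) * Real.log (1 - v / (2 * Δ)))))) ∧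
    AnalyticOnNhd ℝ
      (fun v : ℝ => -(v / (2 * Δ) * Real.log (v / (2 * Δ)) +
        (1 - v / (2 * Δ)) * Real.log (1 - v / (2 * Δ))))
      (Set.Ioo 0 (2 * Δ)) := by
  refine ⟨?_, binEnt_analytic Δ hΔ⟩
  intro v hv0 hv2 _hirr
  have hc : (0:ℝ) < 2 * Δ := by linarith
  set x : ℝ := v / (2 * Δ) with hxdef
  have hx0 : 0 < x := div_pos hv0 hc
  have hx1 : x < 1 := (div_lt_one hc).mpr hv2
  show Tendsto (fun N => σ N v) atTop (nhds (binEnt x))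
  -- eventual exact formula
  have key : ∀ᶠ N : ℕ in atTop,
      σ N v = (1 / (N:ℝ)) * Real.log (((N - 1).choose ⌊x * (N:ℝ)⌋₊ : ℕ) : ℝ) := by
    filter_upwards [eventually_ge_atTop 1] with N hN
    obtain ⟨K, rfl⟩ : ∃ K, N = K + 1 := ⟨N - 1, by omega⟩
    have hNpos : (0:ℝ) < ((K+1 : ℕ):ℝ) := by positivity
    set m := ⌊x * ((K+1 : ℕ):ℝ)⌋₊ with hm
    have cond : ∀ j : ℕ, (2 * Δ * j / ((K+1:ℕ):ℝ) ≤ v) ↔ j ≤ m := by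
      intro j
      rw [hm, Nat.le_floor_iff (by positivity), div_le_iff₀ hNpos]
      rw [hxdef, div_mul_eq_mul_div, le_div_iff₀ hc, mul_comm ((j:ℝ)) (2*Δ)]
    have hmK : m < K + 1 := by
      rw [hm, Nat.floor_lt (by positivity)]
      calc x * ((K+1:ℕ):ℝ) < 1 * ((K+1:ℕ):ℝ) := by
            exact mul_lt_mul_of_pos_right hx1 hNpos
      _ = ((K+1:ℕ):ℝ) := one_mul _
    have hsum : (∑ j ∈ Finset.range ((K+1) + 1), (-1 : ℤ) ^ j * μ (K+1) j v)
        = (-1) ^ m * (K.choose m : ℤ) := by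
      have e1 : ∀ j ∈ Finset.range ((K+1) + 1), (-1:ℤ)^j * μ (K+1) j v
          = if j ≤ m then (-1:ℤ)^j * (((K+1).choose j : ℕ) : ℤ) else 0 := by
        intro j _
        rw [hμ]
        by_cases h : j ≤ m
        · rw [if_pos ((cond j).mpr h), if_pos h]
        · rw [if_neg (fun hh => h ((cond j).mp hh)), if_neg h, mul_zero]
      rw [Finset.sum_congr rfl e1]
      rw [← Finset.sum_subset
          (Finset.range_subset_range.mpr (by omega) : Finset.range (m+1) ⊆ Finset.range ((K+1)+1))
          (fun j hj hnj => if_neg (by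
            simp only [Finset.mem_range] at hj hnj
            omega))]
      rw [Finset.sum_congr rfl (fun j hj => if_pos (by
        simp only [Finset.mem_range] at hj
        omega))]
      exact altSum K m
    rw [hσ, hsum]
    rw [show K + 1 - 1 = K from rfl]
    congr 2
    push_cast
    rw [abs_mul, abs_pow, abs_neg, abs_one, one_pow, one_mul,
      abs_of_nonneg (by positivity)]
  -- limits of auxiliary sequences
  have hm_div : Tendsto (fun N : ℕ => (⌊x * (N:ℝ)⌋₊ : ℝ) / N) atTop (nhds x) :=
    (tendsto_nat_floor_mul_div_atTop hx0.le).comp tendsto_natCast_atTop_atTop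
  have hA : Tendsto (fun N : ℕ => ((N:ℝ) - 1) / N) atTop (nhds 1) := by
    have h1 : Tendsto (fun N : ℕ => 1 - 1/(N:ℝ)) atTop (nhds 1) := by
      simpa using (tendsto_const_nhds : Tendsto (fun _ : ℕ => (1:ℝ)) atTop (nhds 1)).sub tendsto_one_div_atTop_nhds_zero_nat
    apply h1.congr'
    filter_upwards [eventually_ge_atTop 1] with N hN
    have hN0 : (N:ℝ) ≠ 0 := by positivity
    field_simp
  have hAinv : Tendsto (fun N : ℕ => (N:ℝ) / ((N:ℝ) - 1)) atTop (nhds 1) := by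
    have := hA.inv₀ one_ne_zero
    simpa [one_div, inv_div] using this
  have ha : Tendsto (fun N : ℕ => (⌊x * (N:ℝ)⌋₊ : ℝ) / ((N:ℝ) - 1)) atTop (nhds x) := by
    have h2 := hm_div.mul hAinv
    rw [mul_one] at h2
    apply h2.congr'
    filter_upwards [eventually_ge_atTop 2] with N hN
    have hN0 : (N:ℝ) ≠ 0 := by positivity
    have hN1 : (N:ℝ) - 1 ≠ 0 := by
      have : (2:ℝ) ≤ (N:ℝ) := by exact_mod_cast hN
      intro h; linarith [h]
    field_simp
  have hH : ContinuousAt binEnt x := by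
    have l1 : ContinuousAt Real.log x := Real.continuousAt_log hx0.ne'
    have l2 : ContinuousAt (fun y : ℝ => Real.log (1 - y)) x :=
      ContinuousAt.comp (Real.continuousAt_log (by intro h; linarith [h]))
        (continuousAt_const.sub continuousAt_id)
    exact (((continuousAt_id.mul l1).add
      ((continuousAt_const.sub continuousAt_id).mul l2)).neg)
  have hHa : Tendsto (fun N : ℕ => binEnt ((⌊x * (N:ℝ)⌋₊ : ℝ) / ((N:ℝ) - 1))) atTop
      (nhds (binEnt x)) := hH.tendsto.comp ha
  have hlogN : Tendsto (fun N : ℕ => Real.log N / N) atTop (nhds 0) := by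
    have h0 : Tendsto (fun y : ℝ => Real.log y / y) atTop (nhds 0) := by
      simpa using Real.isLittleO_log_id_atTop.tendsto_div_nhds_zero
    exact h0.comp tendsto_natCast_atTop_atTop
  set U : ℕ → ℝ :=
    fun N => (((N:ℝ) - 1) / N) * binEnt ((⌊x * (N:ℝ)⌋₊ : ℝ) / ((N:ℝ) - 1)) with hUdef
  have hU : Tendsto U atTop (nhds (binEnt x)) := by
    have := hA.mul hHa
    rw [one_mul] at this
    exact this
  have hL : Tendsto (fun N => U N - Real.log N / N) atTop (nhds (binEnt x)) := by
    have := hU.sub hlogN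
    rw [sub_zero] at this
    exact this
  -- eventual squeeze bounds
  have hev1 : ∀ᶠ N : ℕ in atTop, (1:ℝ) ≤ x * N := by
    have : Tendsto (fun N : ℕ => x * (N:ℝ)) atTop atTop :=
      Tendsto.const_mul_atTop hx0 tendsto_natCast_atTop_atTop
    exact this.eventually_ge_atTop 1
  have hev2 : ∀ᶠ N : ℕ in atTop, (2:ℝ) ≤ (1 - x) * N := by
    have : Tendsto (fun N : ℕ => (1 - x) * (N:ℝ)) atTop atTop :=
      Tendsto.const_mul_atTop (by linarith) tendsto_natCast_atTop_atTop
    exact this.eventually_ge_atTop 2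
  have hbound : ∀ᶠ N : ℕ in atTop,
      U N - Real.log N / N ≤ σ N v ∧ σ N v ≤ U N := by
    filter_upwards [key, hev1, hev2, eventually_ge_atTop 2] with N hkey h1 h2 hN2
    set m := ⌊x * (N:ℝ)⌋₊ with hm
    have hNR : (2:ℝ) ≤ (N:ℝ) := by exact_mod_cast hN2
    have hNpos : (0:ℝ) < N := by linarith
    have hm1 : 0 < m := by
      have : (1:ℕ) ≤ m := Nat.le_floor (by exact_mod_cast h1)
      omega
    have hcast : ((N - 1 : ℕ) : ℝ) = (N:ℝ) - 1 := by
      rw [Nat.cast_sub (by omega)]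
      norm_num
    have hmn : m < N - 1 := by
      rw [hm, Nat.floor_lt (by positivity), hcast]
      nlinarith [h2]
    obtain ⟨blo, bhi⟩ := log_choose_bounds (N - 1) m hm1 hmn
    rw [hcast] at blo bhi
    have hplus : (N:ℝ) - 1 + 1 = (N:ℝ) := by ring
    rw [hplus] at blo
    constructor
    · calc U N - Real.log N / N
          = (1/(N:ℝ)) * (((N:ℝ) - 1) * binEnt ((m:ℝ)/((N:ℝ)-1)) - Real.log N) := by
            rw [hUdef]; ring
      _ ≤ (1/(N:ℝ)) * Real.log (((N-1).choose m : ℕ) : ℝ) :=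
            mul_le_mul_of_nonneg_left blo (by positivity)
      _ = σ N v := hkey.symm
    · calc σ N v = (1/(N:ℝ)) * Real.log (((N-1).choose m : ℕ) : ℝ) := hkey
      _ ≤ (1/(N:ℝ)) * (((N:ℝ) - 1) * binEnt ((m:ℝ)/((N:ℝ)-1))) :=
            mul_le_mul_of_nonneg_left bhi (by positivity)
      _ = U N := by rw [hUdef]; ring
  exact tendsto_of_tendsto_of_tendsto_of_le_of_le' hL hU
    (hbound.mono fun N h => h.1) (hbound.mono fun N h => h.2)
end

section
/- Let f : ℝ → ℝ be given by f(v) = P(v) + c · v^n Θ(v) with P a polynomial, c ≠ 0, and n ≥ 1. Then f is exactly (n−1)-times continuously differentiable at 0 and not n-times differentiable at 0; moreover, if additionally f > 0 on a neighborhood of 0, then ln f is exactly (n−1)-times continuously differentiable at 0 and not n-times differentiable at 0. -/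
open Set Filter
open scoped ContDiff

/-- Smoothness of polynomial evaluation. -/
lemma poly_contDiff (P : Polynomial ℝ) : ContDiff ℝ ∞ (fun v : ℝ => P.eval v) := by
  induction P using Polynomial.induction_on' with
  | add p q hp hq =>
      simpa [Polynomial.eval_add] using hp.add hq
  | monomial k a =>
      simpa [Polynomial.eval_monomial] using (contDiff_const (c := a)).mul (contDiff_id.pow k)

/-- Derivative of `(max v 0)^(m+1)` for `m ≥ 1`. -/
lemma gderiv (m : ℕ) (hm : 1 ≤ m) (v : ℝ) :
    HasDerivAt (fun v : ℝ => max v 0 ^ (m + 1)) ((m + 1) * max v 0 ^ m) v := by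
  rcases lt_trichotomy v 0 with hv | hv | hv
  · have h0 : HasDerivAt (fun _ : ℝ => (0 : ℝ)) 0 v := hasDerivAt_const v 0
    have he : (fun v : ℝ => max v 0 ^ (m + 1)) =ᶠ[nhds v] fun _ => (0 : ℝ) := by
      filter_upwards [Iio_mem_nhds hv] with y hy
      rw [max_eq_right (le_of_lt hy)]
      simp
    have : HasDerivAt (fun v : ℝ => max v 0 ^ (m + 1)) 0 v := h0.congr_of_eventuallyEq he
    simpa [max_eq_right hv.le, zero_pow (by omega : m ≠ 0)] using this
  · subst hv
    rw [hasDerivAt_iff_tendsto_slope]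
    have hval : ((m : ℝ) + 1) * max (0 : ℝ) 0 ^ m = 0 := by
      simp [zero_pow (by omega : m ≠ 0)]
    rw [hval]
    have hcont : Filter.Tendsto (fun y : ℝ => max y 0 ^ m) (nhdsWithin 0 {(0 : ℝ)}ᶜ) (nhds 0) := by
      have : Continuous (fun y : ℝ => max y 0 ^ m) := (continuous_id.max continuous_const).pow m
      have := this.tendsto 0
      simp only [max_self, zero_pow (by omega : m ≠ 0)] at this
      exact this.mono_left nhdsWithin_le_nhds
    refine hcont.congr' ?_
    filter_upwards [self_mem_nhdsWithin] with y (hy : y ≠ 0)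
    rw [slope_def_field]
    rcases le_or_gt 0 y with h | h
    · rw [max_eq_left h]
      simp only [max_self, zero_pow (by omega : m + 1 ≠ 0), sub_zero]
      field_simp
      ring
    · rw [max_eq_right h.le]
      simp [zero_pow (by omega : m ≠ 0), zero_pow (by omega : m + 1 ≠ 0)]
  · have he : (fun v : ℝ => max v 0 ^ (m + 1)) =ᶠ[nhds v] fun y => y ^ (m + 1) := by
      filter_upwards [Ioi_mem_nhds hv] with y hy
      rw [max_eq_left (le_of_lt hy)]
    have h0 : HasDerivAt (fun y : ℝ => y ^ (m + 1)) ((m + 1) * v ^ m) v := by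
      simpa using hasDerivAt_pow (m + 1) v
    have := h0.congr_of_eventuallyEq he
    simpa [max_eq_left hv.le] using this

/-- `(max v 0)^(k+1)` is `C^k`. -/
lemma gsmooth (k : ℕ) : ContDiff ℝ (k : ℕ) (fun v : ℝ => max v 0 ^ (k + 1)) := by
  induction k with
  | zero =>
      rw [show ((0 : ℕ) : WithTop ℕ∞) = 0 from rfl, contDiff_zero]
      exact (continuous_id.max continuous_const).pow 1
  | succ k ih =>
      rw [show ((k + 1 : ℕ) : WithTop ℕ∞) = (k : ℕ) + 1 by norm_cast, contDiff_succ_iff_deriv]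
      refine ⟨fun v => (gderiv (k + 1) (by omega) v).differentiableAt, by simp, ?_⟩
      have hd : deriv (fun v : ℝ => max v 0 ^ (k + 1 + 1))
          = fun v : ℝ => ((k : ℝ) + 1 + 1) * max v 0 ^ (k + 1) := by
        funext v
        have := (gderiv (k + 1) (by omega) v).deriv
        rw [this]; push_cast; ring
      rw [hd]
      exact contDiff_const.mul ih

/-- `p + c·(max v 0)^m` is not `C^m` at `0`, for smooth `p` and `c ≠ 0`, `m ≥ 1`. -/
lemma not_cd : ∀ m : ℕ, 1 ≤ m → ∀ c : ℝ, c ≠ 0 → ∀ p : ℝ → ℝ, ContDiff ℝ ∞ p →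
    ¬ ContDiffAt ℝ (m : ℕ) (fun v => p v + c * max v 0 ^ m) 0 := by
  intro m hm
  induction m, hm using Nat.le_induction with
  | base =>
      intro c hc p hp h
      have hpd : DifferentiableAt ℝ p 0 :=
        (hp.differentiable (by simp)).differentiableAt
      have h1 : DifferentiableAt ℝ (fun v : ℝ => max v 0 ^ 1) 0 := by
        have hd := ((h.differentiableAt (by simp)).sub hpd).const_mul c⁻¹
        refine hd.congr_of_eventuallyEq (Filter.EventuallyEq.of_eq (funext fun v => ?_))
        simp only [Pi.sub_apply, pow_one, add_sub_cancel_left]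
        rw [← mul_assoc, inv_mul_cancel₀ hc, one_mul]
      have habs : DifferentiableAt ℝ (fun v : ℝ => |v|) 0 := by
        have hd := (h1.const_mul 2).sub differentiableAt_fun_id
        refine hd.congr_of_eventuallyEq (Filter.EventuallyEq.of_eq (funext fun v => ?_))
        simp only [Pi.sub_apply]
        rcases le_or_gt 0 v with h | h
        · rw [abs_of_nonneg h]; rw [max_eq_left h]; ring
        · rw [abs_of_neg h]; rw [max_eq_right h.le]; ring
      exact not_differentiableAt_abs_zero habs
  | succ m hm ih =>
      intro c hc p hp h
      set f := fun v : ℝ => p v + c * max v 0 ^ (m + 1) with hfdef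
      -- the derivative of f
      have hder : ∀ v, HasDerivAt f (deriv p v + (c * ((m : ℝ) + 1)) * max v 0 ^ m) v := by
        intro v
        have h1 : HasDerivAt p (deriv p v) v :=
          ((hp.differentiable (by simp)) v).hasDerivAt
        have h2 := (gderiv m hm v).const_mul c
        have := (h1.add h2 : HasDerivAt f (deriv p v + c * (((m : ℝ) + 1) * max v 0 ^ m)) v)
        exact this.congr_deriv (by ring)
      have hderiv_eq : deriv f = fun v => deriv p v + (c * ((m : ℝ) + 1)) * max v 0 ^ m :=
        funext fun v => (hder v).deriv
      -- extract ContDiffAt m (deriv f) 0 from ContDiffAt (m+1) f 0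
      obtain ⟨u, uo, hu0, hcd⟩ :=
        (h : ContDiffWithinAt ℝ ((m + 1 : ℕ) : WithTop ℕ∞) f univ 0).contDiffOn'
          (le_refl _) (by simp)
      simp only [insert_eq_of_mem (mem_univ (0 : ℝ)), univ_inter] at hcd
      rw [show ((m + 1 : ℕ) : WithTop ℕ∞) = (m : ℕ) + 1 by norm_cast,
        contDiffOn_succ_iff_deriv_of_isOpen uo] at hcd
      have hcda : ContDiffAt ℝ (m : ℕ) (deriv f) 0 :=
        hcd.2.2.contDiffAt (uo.mem_nhds hu0)
      rw [hderiv_eq] at hcda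
      exact ih (c * ((m : ℝ) + 1)) (mul_ne_zero hc (by positivity)) (deriv p)
        ((contDiff_infty_iff_deriv.mp hp).2) hcda

/-- f(v) = P(v) + c·vⁿΘ(v) with P a polynomial, c ≠ 0, n ≥ 1, is exactly (n−1)-times
continuously differentiable at 0 and not n-times; if moreover f > 0 near 0, the same holds
for ln f. This transfers the nonanalyticity of the density of states to the entropy. -/
theorem polynomial_plus_heaviside_power_differentiability
    (P : Polynomial ℝ) (c : ℝ) (hc : c ≠ 0) (n : ℕ) (hn : 1 ≤ n)
    (f : ℝ → ℝ)
    (hf : ∀ v : ℝ, f v = P.eval v + c * (if 0 ≤ v then v ^ n else 0)) :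
    (ContDiffAt ℝ (n - 1 : ℕ) f 0 ∧ ¬ ContDiffAt ℝ (n : ℕ) f 0) ∧
    ((∀ᶠ v in nhds (0 : ℝ), 0 < f v) →
      ContDiffAt ℝ (n - 1 : ℕ) (fun v => Real.log (f v)) 0 ∧
      ¬ ContDiffAt ℝ (n : ℕ) (fun v => Real.log (f v)) 0) := by
  have hfe : f = fun v => P.eval v + c * max v 0 ^ n := by
    funext v
    rw [hf]
    congr 1
    rcases le_or_gt 0 v with h | h
    · rw [if_pos h, max_eq_left h]
    · rw [if_neg (not_le.mpr h), max_eq_right h.le, zero_pow (by omega : n ≠ 0)]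
  obtain ⟨k, rfl⟩ : ∃ k, n = k + 1 := ⟨n - 1, by omega⟩
  have hsub : (k + 1) - 1 = k := by omega
  have part1a : ContDiffAt ℝ (k : ℕ) f 0 := by
    rw [hfe]
    exact (((poly_contDiff P).of_le (by exact_mod_cast le_top)).add
      (contDiff_const.mul (gsmooth k))).contDiffAt
  have part1b : ¬ ContDiffAt ℝ ((k + 1 : ℕ)) f 0 := by
    rw [hfe]
    exact not_cd (k + 1) (by omega) c hc _ (poly_contDiff P)
  refine ⟨⟨by rwa [hsub], part1b⟩, fun hpos => ?_⟩
  have hf0 : 0 < f 0 := hpos.self_of_nhds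
  constructor
  · rw [hsub]
    exact part1a.log (ne_of_gt hf0)
  · intro h
    apply part1b
    have hexp : ContDiffAt ℝ ((k + 1 : ℕ)) (fun v => Real.exp (Real.log (f v))) 0 := h.exp
    refine hexp.congr_of_eventuallyEq ?_
    filter_upwards [hpos] with v hv
    exact (Real.exp_log hv).symm
end
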